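/- arXiv:2212.03016 — 4 statements merged into one kernel-verified Lean document; each statement's English description precedes it below -/
import Mathlib

section
/- Let f : ℝ_{≥0}^T → ℝ_{≥0} be monotone, convex, differentiable with f(0) = 0 and satisfying ⟨∇f(x), x⟩ ≤ q·f(x) for some q > 1. Then for any 0 < γ < 1 and y ∈ ℝ_{≥0}^T, f*(γy) ≤ γ^{q/(q−1)} · f*(y). -/
open Finset

-- scaling lemma
lemma scaling_aux {T : ℕ} (f : (Fin T → ℝ) → ℝ) (g : (Fin T → ℝ) → (Fin T → ℝ))
    (q : ℝ) (hq : 1 < q)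
    (hdiff : ∀ x v : Fin T → ℝ, HasDerivAt (fun t : ℝ => f (x + t • v)) (∑ i, g x i * v i) 0)
    (hgrowth : ∀ x, 0 ≤ x → ∑ i, g x i * x i ≤ q * f x)
    (w : Fin T → ℝ) (hw : 0 ≤ w) (l : ℝ) (hl : 1 ≤ l) :
    f (l • w) ≤ l ^ q * f w := by
  set φ : ℝ → ℝ := fun t => f (t • w) with hφ
  have hder : ∀ t : ℝ, HasDerivAt φ (∑ i, g (t • w) i * w i) t := by
    intro t
    have h := hdiff (t • w) w
    have h1 : HasDerivAt (fun u : ℝ => u - t) 1 t := (hasDerivAt_id t).sub_const t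
    have h0 : HasDerivAt (fun s : ℝ => f (t • w + s • w)) (∑ i, g (t • w) i * w i)
        ((fun u : ℝ => u - t) t) := by simpa using h
    have h2 := HasDerivAt.comp (h := fun u : ℝ => u - t) (h₂ := fun s : ℝ => f (t • w + s • w)) (x := t) h0 h1
    simp only [mul_one] at h2
    have heq : ((fun s : ℝ => f (t • w + s • w)) ∘ (fun u : ℝ => u - t)) = φ := by
      ext u
      simp only [Function.comp, hφ]
      congr 1
      module
    rwa [heq] at h2
  set ψ : ℝ → ℝ := fun t => φ t * t ^ (-q) with hψ
  have hψder : ∀ t : ℝ, 0 < t → HasDerivAt ψ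
      ((∑ i, g (t • w) i * w i) * t ^ (-q) + φ t * (-q * t ^ (-q - 1))) t := by
    intro t ht
    exact (hder t).mul (Real.hasDerivAt_rpow_const (Or.inl ht.ne'))
  have hanti : AntitoneOn ψ (Set.Ici 1) := by
    apply antitoneOn_of_deriv_nonpos (convex_Ici 1)
    · intro t ht
      have ht0 : (0:ℝ) < t := lt_of_lt_of_le zero_lt_one ht
      exact (hψder t ht0).continuousAt.continuousWithinAt
    · intro t ht
      rw [interior_Ici] at ht
      have ht0 : (0:ℝ) < t := lt_trans zero_lt_one ht
      exact (hψder t ht0).differentiableAt.differentiableWithinAt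
    · intro t ht
      rw [interior_Ici] at ht
      have ht0 : (0:ℝ) < t := lt_trans zero_lt_one ht
      rw [(hψder t ht0).deriv]
      have hgw : ∑ i, g (t • w) i * (t • w) i ≤ q * f (t • w) := by
        apply hgrowth
        intro i
        exact mul_nonneg ht0.le (hw i)
      have hsum : ∑ i, g (t • w) i * (t • w) i = t * ∑ i, g (t • w) i * w i := by
        rw [mul_sum]; congr 1; ext i; simp [Pi.smul_apply, smul_eq_mul]; ring
      rw [hsum] at hgw
      have hpow : t ^ (-q) = t * t ^ (-q - 1) := by
        rw [← Real.rpow_one_add' ht0.le (by intro h; nlinarith)]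
        ring_nf
      have hpos : (0:ℝ) < t ^ (-q - 1) := Real.rpow_pos_of_pos ht0 _
      rw [hpow]
      have : ((∑ i, g (t • w) i * w i) * (t * t ^ (-q - 1)) + φ t * (-q * t ^ (-q - 1)))
          = (t * (∑ i, g (t • w) i * w i) - q * φ t) * t ^ (-q - 1) := by ring
      rw [this]
      apply mul_nonpos_of_nonpos_of_nonneg _ hpos.le
      simp only [hφ]
      linarith
  have key := hanti (Set.self_mem_Ici) (Set.mem_Ici.mpr hl) hl
  have hl0 : (0:ℝ) < l := lt_of_lt_of_le zero_lt_one hl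
  simp only [hψ, hφ, one_smul, Real.one_rpow, mul_one] at key
  have hlq : (0:ℝ) < l ^ q := Real.rpow_pos_of_pos hl0 _
  have := mul_le_mul_of_nonneg_left key hlq.le
  calc f (l • w) = l ^ q * (f (l • w) * l ^ (-q)) := by
        rw [mul_comm (f (l • w)), ← mul_assoc, ← Real.rpow_add hl0]
        simp
    _ ≤ l ^ q * f w := this

noncomputable def fenchelStar {T : ℕ} (f : (Fin T → ℝ) → ℝ) (y : Fin T → ℝ) : EReal :=
  ⨆ w ∈ {w : Fin T → ℝ | 0 ≤ w}, ((∑ i, w i * y i - f w : ℝ) : EReal)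

theorem conjugate_scaling {T : ℕ} (f : (Fin T → ℝ) → ℝ) (g : (Fin T → ℝ) → (Fin T → ℝ))
    (q : ℝ) (hq : 1 < q)
    (hnonneg : ∀ x, 0 ≤ x → 0 ≤ f x)
    (hmono : ∀ x y : Fin T → ℝ, 0 ≤ x → x ≤ y → f x ≤ f y)
    (hconv : ConvexOn ℝ {w : Fin T → ℝ | 0 ≤ w} f)
    (hdiff : ∀ x v : Fin T → ℝ, HasDerivAt (fun t : ℝ => f (x + t • v)) (∑ i, g x i * v i) 0)
    (hf0 : f 0 = 0)
    (hgrowth : ∀ x, 0 ≤ x → ∑ i, g x i * x i ≤ q * f x)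
    (γ : ℝ) (hγ0 : 0 < γ) (hγ1 : γ < 1) (y : Fin T → ℝ) (hy : 0 ≤ y) :
    fenchelStar f (γ • y) ≤ ((γ ^ (q / (q - 1)) : ℝ) : EReal) * fenchelStar f y := by
  have hq1 : (0:ℝ) < q - 1 := by linarith
  set c : ℝ := γ ^ (q / (q - 1)) with hc
  have hcpos : (0:ℝ) < c := Real.rpow_pos_of_pos hγ0 _
  set θ : ℝ := γ ^ (1 / (q - 1)) with hθ
  have hθpos : (0:ℝ) < θ := Real.rpow_pos_of_pos hγ0 _
  have hθlt1 : θ < 1 := Real.rpow_lt_one hγ0.le hγ1 (by positivity)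
  have hl1 : 1 ≤ θ⁻¹ := (one_le_inv_iff₀.mpr ⟨hθpos, hθlt1.le⟩)
  -- key identities
  have hcθ : c * θ⁻¹ = γ := by
    rw [hc, hθ, ← Real.rpow_neg hγ0.le, ← Real.rpow_add hγ0]
    rw [show q / (q - 1) + -(1 / (q - 1)) = 1 by field_simp; ring]
    exact Real.rpow_one γ
  have hcθq : c * (θ⁻¹) ^ q = 1 := by
    rw [hc, hθ, ← Real.rpow_neg hγ0.le, ← Real.rpow_mul hγ0.le, ← Real.rpow_add hγ0,
      show q / (q - 1) + -(1 / (q - 1)) * q = 0 by field_simp; ring, Real.rpow_zero]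
  rw [fenchelStar]
  apply iSup₂_le
  intro w hw
  have hw' : (0:Fin T → ℝ) ≤ w := hw
  set u : Fin T → ℝ := θ⁻¹ • w with hu
  have hu0 : (0:Fin T → ℝ) ≤ u := by
    intro i
    exact mul_nonneg (by positivity) (hw' i)
  have hfu : f u ≤ (θ⁻¹) ^ q * f w := scaling_aux f g q hq hdiff hgrowth w hw' θ⁻¹ hl1
  -- the real inequality
  have hreal : ∑ i, w i * (γ • y) i - f w ≤ c * (∑ i, u i * y i - f u) := by
    have hsum : ∑ i, u i * y i = θ⁻¹ * ∑ i, w i * y i := by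
      rw [mul_sum]; congr 1; ext i; simp [hu, Pi.smul_apply, smul_eq_mul]; ring
    have hsum2 : ∑ i, w i * (γ • y) i = γ * ∑ i, w i * y i := by
      rw [mul_sum]; congr 1; ext i; simp [Pi.smul_apply, smul_eq_mul]; ring
    have h1 : c * f u ≤ f w := by
      calc c * f u ≤ c * ((θ⁻¹) ^ q * f w) := by
            exact mul_le_mul_of_nonneg_left hfu hcpos.le
        _ = (c * (θ⁻¹) ^ q) * f w := by ring
        _ = f w := by rw [hcθq]; ring
    rw [hsum2, mul_sub, hsum, ← mul_assoc, hcθ]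
    linarith
  -- pass to EReal
  have hle1 : ((∑ i, u i * y i - f u : ℝ) : EReal) ≤ fenchelStar f y := by
    rw [fenchelStar]
    exact le_iSup₂ (f := fun w _ => ((∑ i, w i * y i - f w : ℝ) : EReal)) u hu0
  calc ((∑ i, w i * (γ • y) i - f w : ℝ) : EReal)
      ≤ ((c * (∑ i, u i * y i - f u) : ℝ) : EReal) := by exact_mod_cast hreal
    _ = (c : EReal) * ((∑ i, u i * y i - f u : ℝ) : EReal) := EReal.coe_mul _ _
    _ ≤ (c : EReal) * fenchelStar f y := by
        exact mul_le_mul_of_nonneg_left hle1 (by exact_mod_cast hcpos.le)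
end

section
/- Let f : ℝ_{≥0}^T → ℝ_{≥0} be monotone, convex, differentiable with f(0) = 0 and ⟨∇f(x), x⟩ ≤ q·f(x) for some q > 1. Then for any 0 < γ < 1 and y ∈ ℝ_{≥0}^T, f*(γ∇f(y)) ≤ γ^{q/(q−1)} (q−1) f(y). -/
open Finset

lemma grad_ineq_aux {T : ℕ} (f : (Fin T → ℝ) → ℝ) (g : (Fin T → ℝ) → (Fin T → ℝ))
    (hconv : ConvexOn ℝ {w : Fin T → ℝ | 0 ≤ w} f)
    (hdiff : ∀ x v : Fin T → ℝ, HasDerivAt (fun t : ℝ => f (x + t • v)) (∑ i, g x i * v i) 0)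
    (y u : Fin T → ℝ) (hy : 0 ≤ y) (hu : 0 ≤ u) :
    ∑ i, g y i * (u i - y i) ≤ f u - f y := by
  have h := hdiff y (u - y)
  have h' : HasDerivAt (fun t : ℝ => f (y + t • (u - y))) (∑ i, g y i * (u i - y i)) 0 := by
    simpa using h
  have hslope := hasDerivAt_iff_tendsto_slope.mp h'
  have hslope' : Filter.Tendsto (slope (fun t : ℝ => f (y + t • (u - y))) 0)
      (nhdsWithin 0 (Set.Ioi 0)) (nhds (∑ i, g y i * (u i - y i))) :=
    hslope.mono_left (nhdsWithin_mono _ (fun x hx => ne_of_gt hx))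
  refine le_of_tendsto hslope' ?_
  filter_upwards [Ioo_mem_nhdsGT_of_mem
    (show (0:ℝ) ∈ Set.Ico (0:ℝ) 1 by constructor <;> norm_num)] with t ht
  have ht0 : 0 < t := ht.1
  have ht1 : t < 1 := ht.2
  have hmem : y + t • (u - y) = (1 - t) • y + t • u := by
    ext i; simp [Pi.add_apply, Pi.smul_apply, Pi.sub_apply]; ring
  have hc := hconv.2 hy hu (by linarith : (0:ℝ) ≤ 1 - t) ht0.le (by ring)
  have hval : f (y + t • (u - y)) ≤ (1 - t) * f y + t * f u := by
    rw [hmem]; simpa using hc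
  rw [slope_def_field]
  simp only [zero_smul, add_zero, sub_zero]
  rw [div_le_iff₀ ht0]
  nlinarith

lemma scale_ineq_aux {T : ℕ} (f : (Fin T → ℝ) → ℝ) (g : (Fin T → ℝ) → (Fin T → ℝ)) (q : ℝ)
    (hdiff : ∀ x v : Fin T → ℝ, HasDerivAt (fun t : ℝ => f (x + t • v)) (∑ i, g x i * v i) 0)
    (hgrowth : ∀ x, 0 ≤ x → ∑ i, g x i * x i ≤ q * f x)
    (u : Fin T → ℝ) (hu : 0 ≤ u) (s : ℝ) (hs0 : 0 < s) (hs1 : s ≤ 1) :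
    s ^ q * f u ≤ f (s • u) := by
  set φ : ℝ → ℝ := fun t => f (t • u) with hφdef
  have hφ : ∀ t : ℝ, HasDerivAt φ (∑ i, g (t • u) i * u i) t := by
    intro t
    have h := hdiff (t • u) u
    have hinner : HasDerivAt (fun z : ℝ => z - t) 1 t := (hasDerivAt_id t).sub_const t
    have h2 := HasDerivAt.comp t (by simpa using h) hinner
    have heq : ((fun τ : ℝ => f (t • u + τ • u)) ∘ (fun z : ℝ => z - t)) = φ := by
      funext z
      simp only [Function.comp_apply, hφdef]
      congr 1
      ext i
      simp [Pi.add_apply, Pi.smul_apply, smul_eq_mul]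
      ring
    rw [heq] at h2
    simpa using h2
  set ψ : ℝ → ℝ := fun t => φ t * t ^ (-q) with hψdef
  have hψ : ∀ t : ℝ, 0 < t → HasDerivAt ψ
      ((∑ i, g (t • u) i * u i) * t ^ (-q) + φ t * (-q * t ^ (-q - 1))) t := by
    intro t ht
    exact (hφ t).mul (Real.hasDerivAt_rpow_const (Or.inl ht.ne'))
  have hψderiv_nonpos : ∀ t : ℝ, 0 < t →
      (∑ i, g (t • u) i * u i) * t ^ (-q) + φ t * (-q * t ^ (-q - 1)) ≤ 0 := by
    intro t ht
    have key : t * (∑ i, g (t • u) i * u i) ≤ q * φ t := by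
      have := hgrowth (t • u) (smul_nonneg ht.le hu)
      calc t * (∑ i, g (t • u) i * u i) = ∑ i, g (t • u) i * (t • u) i := by
            rw [Finset.mul_sum]; exact Finset.sum_congr rfl fun i _ => by
              simp [Pi.smul_apply, smul_eq_mul]; ring
        _ ≤ q * f (t • u) := this
        _ = q * φ t := rfl
    have hrw : t ^ (-q) = t ^ (-q - 1) * t := by
      have h1 : t ^ (-q) = t ^ (-q - 1 + 1) := by norm_num
      rw [h1, Real.rpow_add ht, Real.rpow_one]
    have hfac : (∑ i, g (t • u) i * u i) * t ^ (-q) + φ t * (-q * t ^ (-q - 1))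
        = (t * (∑ i, g (t • u) i * u i) - q * φ t) * t ^ (-q - 1) := by
      rw [hrw]; ring
    rw [hfac]
    exact mul_nonpos_of_nonpos_of_nonneg (by linarith) (Real.rpow_nonneg ht.le _)
  have hanti : AntitoneOn ψ (Set.Icc s 1) := by
    apply antitoneOn_of_deriv_nonpos (convex_Icc s 1)
    · intro t ht
      exact ((hψ t (lt_of_lt_of_le hs0 ht.1)).continuousAt).continuousWithinAt
    · rw [interior_Icc]
      intro t ht
      exact (hψ t (hs0.trans ht.1)).differentiableAt.differentiableWithinAt
    · rw [interior_Icc]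
      intro t ht
      rw [(hψ t (hs0.trans ht.1)).deriv]
      exact hψderiv_nonpos t (hs0.trans ht.1)
  have hle : ψ 1 ≤ ψ s := hanti ⟨le_refl s, hs1⟩ ⟨hs1, le_refl 1⟩ hs1
  have hψ1 : ψ 1 = f u := by
    simp [hψdef, hφdef, Real.one_rpow]
  have hψs : ψ s = f (s • u) * s ^ (-q) := rfl
  rw [hψ1, hψs] at hle
  have hmul : s ^ q * s ^ (-q) = 1 := by
    rw [← Real.rpow_add hs0]; simp
  calc s ^ q * f u ≤ s ^ q * (f (s • u) * s ^ (-q)) :=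
        mul_le_mul_of_nonneg_left hle (Real.rpow_nonneg hs0.le q)
    _ = (s ^ q * s ^ (-q)) * f (s • u) := by ring
    _ = f (s • u) := by rw [hmul, one_mul]

theorem conjugate_of_scaled_gradient {T : ℕ} (f : (Fin T → ℝ) → ℝ)
    (g : (Fin T → ℝ) → (Fin T → ℝ)) (q : ℝ) (hq : 1 < q)
    (hnonneg : ∀ x, 0 ≤ x → 0 ≤ f x)
    (hmono : ∀ x y : Fin T → ℝ, 0 ≤ x → x ≤ y → f x ≤ f y)
    (hconv : ConvexOn ℝ {w : Fin T → ℝ | 0 ≤ w} f)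
    (hdiff : ∀ x v : Fin T → ℝ, HasDerivAt (fun t : ℝ => f (x + t • v)) (∑ i, g x i * v i) 0)
    (hf0 : f 0 = 0)
    (hgrowth : ∀ x, 0 ≤ x → ∑ i, g x i * x i ≤ q * f x)
    (γ : ℝ) (hγ0 : 0 < γ) (hγ1 : γ < 1) (y : Fin T → ℝ) (hy : 0 ≤ y) :
    fenchelStar f (γ • g y) ≤ ((γ ^ (q / (q - 1)) * (q - 1) * f y : ℝ) : EReal) := by
  rw [fenchelStar]
  refine iSup₂_le fun w hw => ?_
  have hw' : 0 ≤ w := hw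
  rw [EReal.coe_le_coe_iff]
  have hq1 : (0:ℝ) < q - 1 := by linarith
  set s : ℝ := γ ^ ((q - 1)⁻¹) with hsdef
  have hs0 : 0 < s := Real.rpow_pos_of_pos hγ0 _
  have hs1 : s ≤ 1 := Real.rpow_le_one hγ0.le hγ1.le (by positivity)
  set u : Fin T → ℝ := s⁻¹ • w with hudef
  have hu : 0 ≤ u := fun i => by
    have h1 := hw' i
    have : u i = s⁻¹ * w i := rfl
    rw [this]; exact mul_nonneg (inv_nonneg.mpr hs0.le) h1
  have hwu : w = s • u := by rw [hudef, smul_inv_smul₀ hs0.ne']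
  have hA := grad_ineq_aux f g hconv hdiff y u hy hu
  have hB := scale_ineq_aux f g q hdiff hgrowth u hu s hs0 hs1
  have hG := hgrowth y hy
  have hsq : s ^ q = γ ^ (q / (q - 1)) := by
    rw [hsdef, ← Real.rpow_mul hγ0.le]
    congr 1
    field_simp
  have hγs : γ * s = s ^ q := by
    rw [hsdef, ← Real.rpow_mul hγ0.le]
    nth_rewrite 1 [← Real.rpow_one γ]
    rw [← Real.rpow_add hγ0]
    congr 1
    field_simp
    ring
  have hAu : ∑ i, g y i * u i ≤ f u + (q - 1) * f y := by
    have hsplit : ∑ i, g y i * (u i - y i) = ∑ i, g y i * u i - ∑ i, g y i * y i := by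
      rw [← Finset.sum_sub_distrib]
      exact Finset.sum_congr rfl fun i _ => by ring
    rw [hsplit] at hA
    linarith
  have hsum : ∑ i, w i * (γ • g y) i = γ * s * ∑ i, g y i * u i := by
    rw [hwu, Finset.mul_sum]
    exact Finset.sum_congr rfl fun i _ => by
      simp [Pi.smul_apply, smul_eq_mul]; ring
  have hsqnn : 0 ≤ s ^ q := Real.rpow_nonneg hs0.le q
  have hmulA : s ^ q * (∑ i, g y i * u i) ≤ s ^ q * (f u + (q - 1) * f y) :=
    mul_le_mul_of_nonneg_left hAu hsqnn
  calc ∑ i, w i * (γ • g y) i - f w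
      = γ * s * (∑ i, g y i * u i) - f (s • u) := by rw [hsum, ← hwu]
    _ = s ^ q * (∑ i, g y i * u i) - f (s • u) := by rw [hγs]
    _ ≤ s ^ q * (f u + (q - 1) * f y) - s ^ q * f u := by linarith
    _ = s ^ q * ((q - 1) * f y) := by ring
    _ = γ ^ (q / (q - 1)) * (q - 1) * f y := by rw [hsq]; ring
end

section
/- Suppose a nonnegative differentiable function x(τ) satisfies the differential inequality x'(τ) ≥ s·(x(τ) + 1/k) on an interval of total measure m, with x(τ₀) = 0, x nondecreasing, and x'(τ) ≥ 0 elsewhere. Then the final value satisfies x̄ ≥ (1/k)(exp(s·m) − 1). -/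
open MeasureTheory

theorem gronwall_lower_bound (x : ℝ → ℝ) (τ₀ τ₁ s k m : ℝ)
    (hτ : τ₀ ≤ τ₁) (hs : 0 < s) (hk : 0 < k) (hm : 0 ≤ m)
    (hx0 : x τ₀ = 0)
    (hdiff : ∀ τ ∈ Set.Icc τ₀ τ₁, DifferentiableAt ℝ x τ)
    (E : Set ℝ) (hE : MeasurableSet E) (hEsub : E ⊆ Set.Icc τ₀ τ₁)
    (hEm : (volume E).toReal = m)
    (hode : ∀ τ ∈ E, s * (x τ + 1 / k) ≤ deriv x τ)
    (hmono : ∀ τ ∈ Set.Icc τ₀ τ₁, 0 ≤ deriv x τ) :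
    (1 / k) * (Real.exp (s * m) - 1) ≤ x τ₁ := by
  -- x is monotone on Icc
  have hxcont : ContinuousOn x (Set.Icc τ₀ τ₁) :=
    fun τ hτ' => (hdiff τ hτ').continuousAt.continuousWithinAt
  have hxmono : MonotoneOn x (Set.Icc τ₀ τ₁) := by
    apply monotoneOn_of_deriv_nonneg (convex_Icc _ _) hxcont
    · intro τ hτ'
      rw [interior_Icc] at hτ'
      exact ((hdiff τ (Set.Ioo_subset_Icc_self hτ')).differentiableWithinAt)
    · intro τ hτ'
      rw [interior_Icc] at hτ'
      exact hmono τ (Set.Ioo_subset_Icc_self hτ')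
  have hxnonneg : ∀ τ ∈ Set.Icc τ₀ τ₁, 0 ≤ x τ := by
    intro τ hτ'
    have := hxmono (Set.left_mem_Icc.2 hτ) hτ' hτ'.1
    linarith [hx0 ▸ this]
  have hpos : ∀ τ ∈ Set.Icc τ₀ τ₁, 0 < k * x τ + 1 := by
    intro τ hτ'
    nlinarith [hxnonneg τ hτ']
  -- define u = log (k x + 1)
  set u : ℝ → ℝ := fun τ => Real.log (k * x τ + 1) with hu
  have hucont : ContinuousOn u (Set.Icc τ₀ τ₁) := by
    apply ContinuousOn.log
    · exact (continuousOn_const.mul hxcont).add continuousOn_const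
    · intro τ hτ'; exact (hpos τ hτ').ne'
  set g' : ℝ → ℝ := fun τ => k * deriv x τ / (k * x τ + 1) with hg'
  have huderiv : ∀ τ ∈ Set.Ioo τ₀ τ₁, HasDerivWithinAt u (g' τ) (Set.Ioi τ) τ := by
    intro τ hτ'
    have hxd := hdiff τ (Set.Ioo_subset_Icc_self hτ')
    have h1 : HasDerivAt (fun t => k * x t + 1) (k * deriv x τ) τ := by
      simpa using ((hxd.hasDerivAt.const_mul k).add_const 1)
    have h2 : HasDerivAt u (k * deriv x τ / (k * x τ + 1)) τ := by
      exact h1.log (hpos τ (Set.Ioo_subset_Icc_self hτ')).ne'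
    exact h2.hasDerivWithinAt
  -- φ = s on E, 0 elsewhere
  set φ : ℝ → ℝ := E.indicator (fun _ => s) with hφ
  have hEfin : volume E < ⊤ :=
    lt_of_le_of_lt (measure_mono hEsub) (by simp [Real.volume_Icc])
  have hφint : IntegrableOn φ (Set.Icc τ₀ τ₁) := by
    have : Integrable φ volume := by
      rw [hφ, integrable_indicator_iff hE]
      exact integrableOn_const hEfin.ne
    exact this.integrableOn
  have hφg : ∀ τ ∈ Set.Ioo τ₀ τ₁, φ τ ≤ g' τ := by
    intro τ hτ'
    have hτI := Set.Ioo_subset_Icc_self hτ'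
    have hp := hpos τ hτI
    by_cases hτE : τ ∈ E
    · have h1 := hode τ hτE
      have : s * (k * x τ + 1) ≤ k * deriv x τ := by
        have : s * (x τ + 1 / k) * k ≤ deriv x τ * k :=
          mul_le_mul_of_nonneg_right h1 hk.le
        field_simp at this
        nlinarith
      simp only [hφ, Set.indicator_of_mem hτE]
      rw [hg', le_div_iff₀ hp]
      linarith
    · simp only [hφ, Set.indicator_of_notMem hτE]
      exact div_nonneg (mul_nonneg hk.le (hmono τ hτI)) hp.le
  -- FTC inequality
  have key : (∫ y in τ₀..τ₁, φ y) ≤ u τ₁ - u τ₀ :=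
    intervalIntegral.integral_le_sub_of_hasDeriv_right_of_le hτ hucont huderiv hφint hφg
  -- compute the integral of φ
  have hvol : volume (E ∩ Set.Ioc τ₀ τ₁) = volume E := by
    apply le_antisymm (measure_mono Set.inter_subset_left)
    have hsub : E \ {τ₀} ⊆ E ∩ Set.Ioc τ₀ τ₁ := by
      rintro t ⟨htE, ht0⟩
      obtain ⟨h1, h2⟩ := hEsub htE
      exact ⟨htE, lt_of_le_of_ne h1 (fun h => ht0 h.symm), h2⟩
    calc volume E = volume (E \ {τ₀}) := (measure_diff_null (measure_singleton τ₀)).symm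
      _ ≤ volume (E ∩ Set.Ioc τ₀ τ₁) := measure_mono hsub
  have hint : (∫ y in τ₀..τ₁, φ y) = s * m := by
    rw [intervalIntegral.integral_of_le hτ, hφ, setIntegral_indicator hE]
    rw [setIntegral_const, Set.inter_comm, measureReal_def, hvol, hEm, smul_eq_mul, mul_comm]
  -- conclude
  have hu0 : u τ₀ = 0 := by simp [hu, hx0]
  have hxt1 := hpos τ₁ (Set.right_mem_Icc.2 hτ)
  have hlog : s * m ≤ Real.log (k * x τ₁ + 1) := by
    rw [hint, hu0] at key
    simpa [hu] using key
  have hexp : Real.exp (s * m) ≤ k * x τ₁ + 1 :=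
    (Real.le_log_iff_exp_le hxt1).1 hlog
  rw [div_mul_eq_mul_div, one_mul, div_le_iff₀ hk]
  nlinarith
end

section
/- Let y, z, c ∈ ℝ_{≥0}^T with y − z ≤ δ·c coordinatewise for some 0 < δ < 1, and let f be monotone convex with gradient bound as in Lemma 'conjugateabc'. If c = ∇f(x̄), then f*(y − z) ≤ f*(δ∇f(x̄)) ≤ δ^{q/(q−1)}(q−1)f(x̄). -/
open Finset Real

theorem gradIneq {T : ℕ} (f : (Fin T → ℝ) → ℝ) (g : (Fin T → ℝ) → (Fin T → ℝ))
    (hconv : ConvexOn ℝ {w : Fin T → ℝ | 0 ≤ w} f)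
    (hdiff : ∀ x v : Fin T → ℝ, HasDerivAt (fun t : ℝ => f (x + t • v)) (∑ i, g x i * v i) 0)
    (a b : Fin T → ℝ) (ha : 0 ≤ a) (hb : 0 ≤ b) :
    f a + ∑ i, g a i * (b i - a i) ≤ f b := by
  set d : ℝ := ∑ i, g a i * (b i - a i) with hd
  have key : ∀ t : ℝ, 0 < t → t ≤ 1 → (f (a + t • (b - a)) - f a) / t ≤ f b - f a := by
    intro t ht0 ht1
    have h := hconv.2 ha hb (by linarith : (0:ℝ) ≤ 1 - t) ht0.le (by ring)
    have heq : (1 - t) • a + t • b = a + t • (b - a) := by module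
    rw [heq, smul_eq_mul, smul_eq_mul] at h
    rw [div_le_iff₀ ht0]
    nlinarith [h]
  have hder : HasDerivAt (fun t : ℝ => f (a + t • (b - a))) d 0 := hdiff a (b - a)
  have hslope : Filter.Tendsto (slope (fun t : ℝ => f (a + t • (b - a))) 0)
      (nhdsWithin 0 (Set.Ioi 0)) (nhds d) :=
    (hasDerivAt_iff_tendsto_slope.mp hder).mono_left
      (nhdsWithin_mono 0 (fun x hx => ne_of_gt hx))
  have hled : d ≤ f b - f a := by
    refine le_of_tendsto hslope ?_
    filter_upwards [Ioo_mem_nhdsGT_of_mem (by norm_num : (0:ℝ) ∈ Set.Ico (0:ℝ) 1)] with t ht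
    have := key t ht.1 ht.2.le
    simpa [slope_def_field, div_eq_inv_mul] using this
  linarith

theorem scaleIneq {T : ℕ} (f : (Fin T → ℝ) → ℝ) (g : (Fin T → ℝ) → (Fin T → ℝ))
    (q : ℝ)
    (hdiff : ∀ x v : Fin T → ℝ, HasDerivAt (fun t : ℝ => f (x + t • v)) (∑ i, g x i * v i) 0)
    (hgrowth : ∀ x, 0 ≤ x → ∑ i, g x i * x i ≤ q * f x)
    (v : Fin T → ℝ) (hv : 0 ≤ v) (l : ℝ) (hl0 : 0 < l) (hl1 : l ≤ 1) :
    l ^ q * f v ≤ f (l • v) := by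
  set φ : ℝ → ℝ := fun t => f (t • v) with hφ
  have hφd : ∀ t₀ : ℝ, HasDerivAt φ (∑ i, g (t₀ • v) i * v i) t₀ := by
    intro t₀
    have h := hdiff (t₀ • v) v
    have h2 : HasDerivAt (fun t : ℝ => φ (t₀ + t)) (∑ i, g (t₀ • v) i * v i) 0 := by
      convert h using 2 with t
      simp [hφ, add_smul]
    have h3 := HasDerivAt.comp_const_add (f := fun t : ℝ => φ (t₀ + t))
      (f' := ∑ i, g (t₀ • v) i * v i) (-t₀) t₀ (by simpa using h2)
    simpa using h3
  set ψ : ℝ → ℝ := fun t => φ t * t ^ (-q) with hψ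
  have hψd : ∀ t : ℝ, 0 < t →
      HasDerivAt ψ ((∑ i, g (t • v) i * v i) * t ^ (-q) + φ t * (-q * t ^ (-q - 1))) t := by
    intro t ht
    exact (hφd t).mul (Real.hasDerivAt_rpow_const (Or.inl (ne_of_gt ht)))
  have hanti : AntitoneOn ψ (Set.Icc l 1) := by
    apply antitoneOn_of_deriv_nonpos (convex_Icc l 1)
    · intro t ht
      have ht0 : 0 < t := lt_of_lt_of_le hl0 ht.1
      exact ((hψd t ht0).continuousAt).continuousWithinAt
    · intro t ht
      rw [interior_Icc] at ht
      exact ((hψd t (lt_trans hl0 ht.1)).differentiableAt).differentiableWithinAt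
    · intro t ht
      rw [interior_Icc] at ht
      have ht0 : 0 < t := lt_trans hl0 ht.1
      rw [(hψd t ht0).deriv]
      have hg : (∑ i, g (t • v) i * v i) ≤ q * φ t / t := by
        have h := hgrowth (t • v) (smul_nonneg ht0.le hv)
        rw [le_div_iff₀ ht0]
        calc (∑ i, g (t • v) i * v i) * t = ∑ i, g (t • v) i * (t • v) i := by
              rw [sum_mul]; congr 1; ext i; simp [Pi.smul_apply, smul_eq_mul]; ring
          _ ≤ q * φ t := h
      have hrp : (0:ℝ) < t ^ (-q) := Real.rpow_pos_of_pos ht0 _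
      have hrr : t ^ (-q) / t = t ^ (-q - 1) := by
        rw [Real.rpow_sub ht0, Real.rpow_one]
      have : (∑ i, g (t • v) i * v i) * t ^ (-q) ≤ q * φ t * t ^ (-q - 1) := by
        calc (∑ i, g (t • v) i * v i) * t ^ (-q) ≤ (q * φ t / t) * t ^ (-q) :=
              mul_le_mul_of_nonneg_right hg hrp.le
          _ = q * φ t * (t ^ (-q) / t) := by ring
          _ = q * φ t * t ^ (-q - 1) := by rw [hrr]
      nlinarith [this]
  have h := hanti (Set.mem_Icc.mpr ⟨le_refl l, hl1⟩) (Set.mem_Icc.mpr ⟨hl1, le_refl 1⟩) hl1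
  have hψ1 : ψ 1 = f v := by simp [hψ, hφ]
  have hψl : ψ l = f (l • v) * l ^ (-q) := rfl
  rw [hψ1, hψl] at h
  have hlq : (0:ℝ) < l ^ q := Real.rpow_pos_of_pos hl0 _
  calc l ^ q * f v ≤ l ^ q * (f (l • v) * l ^ (-q)) := mul_le_mul_of_nonneg_left h hlq.le
    _ = f (l • v) * (l ^ q * l ^ (-q)) := by ring
    _ = f (l • v) := by rw [← Real.rpow_add hl0]; simp

theorem conjugate_dual_constraint_bound {T : ℕ} (f : (Fin T → ℝ) → ℝ)
    (g : (Fin T → ℝ) → (Fin T → ℝ)) (q : ℝ) (hq : 1 < q)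
    (hnonneg : ∀ x, 0 ≤ x → 0 ≤ f x)
    (hmono : ∀ x y : Fin T → ℝ, 0 ≤ x → x ≤ y → f x ≤ f y)
    (hconv : ConvexOn ℝ {w : Fin T → ℝ | 0 ≤ w} f)
    (hdiff : ∀ x v : Fin T → ℝ, HasDerivAt (fun t : ℝ => f (x + t • v)) (∑ i, g x i * v i) 0)
    (hf0 : f 0 = 0)
    (hgrowth : ∀ x, 0 ≤ x → ∑ i, g x i * x i ≤ q * f x)
    (δ : ℝ) (hδ0 : 0 < δ) (hδ1 : δ < 1)
    (y z xbar : Fin T → ℝ) (hy : 0 ≤ y) (hz : 0 ≤ z) (hxbar : 0 ≤ xbar)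
    (hyz : 0 ≤ y - z) (hle : y - z ≤ δ • g xbar) :
    fenchelStar f (y - z) ≤ ((δ ^ (q / (q - 1)) * (q - 1) * f xbar : ℝ) : EReal) := by
  rw [fenchelStar]
  apply iSup₂_le
  intro w hw
  rw [EReal.coe_le_coe_iff]
  have hw0 : 0 ≤ w := hw
  have hq1 : 0 < q - 1 := by linarith
  set l : ℝ := δ ^ (1 / (q - 1)) with hldef
  have hl0 : 0 < l := Real.rpow_pos_of_pos hδ0 _
  have hl1 : l ≤ 1 := Real.rpow_le_one hδ0.le hδ1.le (by positivity)
  set w' : Fin T → ℝ := l⁻¹ • w with hw'def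
  have hw'0 : 0 ≤ w' := smul_nonneg (inv_nonneg.mpr hl0.le) hw0
  have hww' : l • w' = w := by
    rw [hw'def, smul_smul, mul_inv_cancel₀ (ne_of_gt hl0), one_smul]
  -- step 1
  have step1 : ∑ i, w i * (y - z) i ≤ δ * ∑ i, w' i * g xbar i * l := by
    have : ∀ i, w i * (y - z) i ≤ δ * (w' i * g xbar i * l) := by
      intro i
      have h1 : (y - z) i ≤ δ * g xbar i := by
        have := hle i; simpa [Pi.smul_apply, smul_eq_mul] using this
      have h2 : w i * (y - z) i ≤ w i * (δ * g xbar i) :=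
        mul_le_mul_of_nonneg_left h1 (hw0 i)
      have h3 : w i = l * w' i := by
        rw [hw'def]; simp [Pi.smul_apply, smul_eq_mul]
        field_simp
      calc w i * (y - z) i ≤ w i * (δ * g xbar i) := h2
        _ = δ * (w' i * g xbar i * l) := by rw [h3]; ring
    calc ∑ i, w i * (y - z) i ≤ ∑ i, δ * (w' i * g xbar i * l) := sum_le_sum fun i _ => this i
      _ = δ * ∑ i, w' i * g xbar i * l := by rw [mul_sum]
  -- step 3 : f w ≥ l^q f w'
  have step3 : l ^ q * f w' ≤ f w := by
    rw [← hww']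
    exact scaleIneq f g q hdiff hgrowth w' hw'0 l hl0 hl1
  -- step 4 : Σ g xbar i * w' i ≤ f w' + (q-1) f xbar
  have step4 : ∑ i, g xbar i * w' i ≤ f w' + (q - 1) * f xbar := by
    have h := gradIneq f g hconv hdiff xbar w' hxbar hw'0
    have h2 : ∑ i, g xbar i * (w' i - xbar i)
        = ∑ i, g xbar i * w' i - ∑ i, g xbar i * xbar i := by
      rw [← sum_sub_distrib]; congr 1; ext i; ring
    have h3 := hgrowth xbar hxbar
    rw [h2] at h
    linarith
  -- combine
  have hdl : δ * l = l ^ q := by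
    rw [hldef, ← Real.rpow_mul hδ0.le]
    nth_rewrite 1 [← Real.rpow_one δ]
    rw [← Real.rpow_add hδ0]
    congr 1
    field_simp
    ring
  have hlq0 : (0:ℝ) ≤ l ^ q := (Real.rpow_pos_of_pos hl0 _).le
  have hlqval : l ^ q = δ ^ (q / (q - 1)) := by
    rw [hldef, ← Real.rpow_mul hδ0.le]
    congr 1
    field_simp
  calc ∑ i, w i * (y - z) i - f w
      ≤ δ * ∑ i, w' i * g xbar i * l - l ^ q * f w' := by linarith
    _ = (δ * l) * (∑ i, w' i * g xbar i) - l ^ q * f w' := by rw [← sum_mul]; ring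
    _ = l ^ q * (∑ i, w' i * g xbar i - f w') := by rw [hdl]; ring
    _ = l ^ q * (∑ i, g xbar i * w' i - f w') := by
        congr 2; exact sum_congr rfl fun i _ => mul_comm _ _
    _ ≤ l ^ q * ((q - 1) * f xbar) := by
        apply mul_le_mul_of_nonneg_left _ hlq0
        linarith
    _ = δ ^ (q / (q - 1)) * (q - 1) * f xbar := by rw [hlqval]; ring
end
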